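/- arXiv:1701.04735 — 2 statements merged into one kernel-verified Lean document; each statement's English description precedes it below -/
import Mathlib

section
/- Takayama's statistic T_n = 1 + 1/n − (2/(μ_n n²)) Σ_{j=1}^{Q_n} (n−j+1) X_{j,n} converges in probability, as n → ∞, to the Takayama parameter T = 1 − (2/μ) ∫ x(1−F(x)) 1_{(x ≤ Z)} dF(x). -/
open MeasureTheory ProbabilityTheory Filter Set Topology

/-- The sorted list of the sample `X 0, ..., X (n-1)` (order statistics). -/
noncomputable def sortedSample {Ω : Type*} (X : ℕ → Ω → ℝ) (n : ℕ) (ω : Ω) : List ℝ :=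
  Multiset.sort ((Finset.range n).val.map (fun i => X i ω)) (· ≤ ·)

/-- Number of poor individuals: `Q_n = #{i ≤ n : X_i ≤ Z}`. -/
noncomputable def povertyCount {Ω : Type*} (X : ℕ → Ω → ℝ) (Z : ℝ) (n : ℕ) (ω : Ω) : ℕ :=
  ((Finset.range n).filter (fun i => X i ω ≤ Z)).card

/-- Takayama's statistic
`T_n = 1 + 1/n − (2/(μ_n n²)) Σ_{j=1}^{Q_n} (n−j+1) X_{j,n}`. -/
noncomputable def takayamaStat {Ω : Type*} (X : ℕ → Ω → ℝ) (Z : ℝ) (n : ℕ) (ω : Ω) : ℝ :=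
  1 + 1 / (n : ℝ) -
    (2 / (((∑ i ∈ Finset.range n, X i ω) / n) * (n : ℝ) ^ 2)) *
      ∑ j ∈ Finset.range (povertyCount X Z n ω),
        ((n : ℝ) - j) * (sortedSample X n ω).getD j 0

/-- Empirical distribution function `F_n(x) = n⁻¹ #{i ≤ n : X_i ≤ x}`. -/
noncomputable def empCdf {Ω : Type*} (X : ℕ → Ω → ℝ) (n : ℕ) (ω : Ω) (x : ℝ) : ℝ :=
  ((Finset.range n).filter (fun i => X i ω ≤ x)).card / n

/-- Functional empirical process `𝔾_n(f) = n^{−1/2} Σ_{i=1}^n (f(X_i) − E f(X₁))`. -/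
noncomputable def fep {Ω : Type*} [MeasureSpace Ω] (X : ℕ → Ω → ℝ) (n : ℕ) (f : ℝ → ℝ)
    (ω : Ω) : ℝ :=
  (∑ i ∈ Finset.range n, (f (X i ω) - ∫ ω', f (X 0 ω'))) / Real.sqrt n

/-- Generalized inverse (quantile function) `F⁻¹(s) = inf {x : F(x) ≥ s}`. -/
noncomputable def Finv (F : ℝ → ℝ) (s : ℝ) : ℝ := sInf {x | s ≤ F x}

/-- `h(x) = x (1 − F(x)) 1_{(x ≤ Z)}`. -/
noncomputable def hFun (F : ℝ → ℝ) (Z x : ℝ) : ℝ := if x ≤ Z then x * (1 - F x) else 0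

/-- `ℓ(x) = x 1_{(x ≤ Z)}`. -/
noncomputable def ellFun (Z x : ℝ) : ℝ := if x ≤ Z then x else 0

/-- `g(x) = 2 (μ⁻² (∫ h dF) x − μ⁻¹ h(x))`. -/
noncomputable def gFun (F : ℝ → ℝ) (Z μ EH x : ℝ) : ℝ :=
  2 * (EH / μ ^ 2 * x - hFun F Z x / μ)

/-- `q(x) = −(2/μ) ℓ(x)`. -/
noncomputable def qFun (Z μ x : ℝ) : ℝ := -(2 / μ) * ellFun Z x


-- Auxiliary lemmas

lemma sort_sum_eq (y : ℕ → ℝ) (n : ℕ) (Z : ℝ)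
    (hinj : ∀ i < n, ∀ k < n, i ≠ k → y i ≠ y k) :
    ∑ j ∈ Finset.range (((Finset.range n).filter (fun i => y i ≤ Z)).card),
        ((n : ℝ) - j) * (Multiset.sort ((Finset.range n).val.map y) (· ≤ ·)).getD j 0
      = ∑ i ∈ Finset.range n, ∑ k ∈ Finset.range n,
          (if y i ≤ Z then y i else 0) * (if y i ≤ y k then (1:ℝ) else 0) := by
  classical
  set m : Multiset ℝ := (Finset.range n).val.map y with hm
  set L : List ℝ := Multiset.sort m (· ≤ ·) with hL
  have hlen : L.length = n := by
    rw [hL, Multiset.length_sort, hm, Multiset.card_map]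
    exact Finset.card_range n
  have hperm : (L : Multiset ℝ) = m := Multiset.sort_eq _ _
  have hsorted : L.Pairwise (· ≤ ·) := Multiset.pairwise_sort _ _
  have hnodup : L.Nodup := by
    have hmn : m.Nodup := by
      rw [hm]
      refine Multiset.Nodup.map_on ?_ (Finset.range n).nodup
      intro a ha b hb hab
      by_contra hne
      exact hinj a (by simpa using ha) b (by simpa using hb) hne hab
    rwa [← hperm, Multiset.coe_nodup] at hmn
  -- Fact 0 : sums over sorted list equal sums over sample
  have fact0 : ∀ f : ℝ → ℝ,
      ∑ j ∈ Finset.range n, f (L.getD j 0) = ∑ i ∈ Finset.range n, f (y i) := by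
    intro f
    have h1 : ∑ i ∈ Finset.range n, f (y i) = (m.map f).sum := by
      rw [hm, Multiset.map_map]
      rfl
    have h2 : (m.map f).sum = (L.map f).sum := by
      rw [← hperm, Multiset.map_coe, Multiset.sum_coe]
    have h3 : (L.map f).sum = ∑ j ∈ Finset.range n, f (L.getD j 0) := by
      conv_lhs => rw [← List.ofFn_get L, List.map_ofFn, List.sum_ofFn]
      have h4 : ∀ j : Fin L.length, (f ∘ L.get) j = f (L.getD (j : ℕ) 0) := by
        intro j
        simp [List.getD_eq_get L 0 j]
      rw [Finset.sum_congr rfl (fun j _ => h4 j), Fin.sum_univ_eq_sum_range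
        (fun j => f (L.getD j 0)) L.length, hlen]
    rw [h1, h2, h3]
  -- strict monotonicity of the sorted list
  have hsl : L.Pairwise (· < ·) := by
    have := hsorted.and hnodup
    exact this.imp (fun h => lt_of_le_of_ne h.1 h.2)
  have hlt : ∀ {j j' : ℕ}, j < n → j' < n → j < j' → L.getD j 0 < L.getD j' 0 := by
    intro j j' hj hj' hjj
    have := List.pairwise_iff_get.mp hsl ⟨j, hlen ▸ hj⟩ ⟨j', hlen ▸ hj'⟩ (by simpa using hjj)
    rwa [List.getD_eq_get L 0 ⟨j, hlen ▸ hj⟩, List.getD_eq_get L 0 ⟨j', hlen ▸ hj'⟩]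
  have hle : ∀ {j j' : ℕ}, j < n → j' < n → j ≤ j' → L.getD j 0 ≤ L.getD j' 0 := by
    intro j j' hj hj' hjj
    rcases eq_or_lt_of_le hjj with rfl | h
    · exact le_rfl
    · exact (hlt hj hj' h).le
  set Q : ℕ := ((Finset.range n).filter (fun i => y i ≤ Z)).card with hQ
  have hQn : Q ≤ n := le_trans (Finset.card_filter_le _ _) (by simp)
  -- the count of sorted entries ≤ Z is Q
  set S : Finset ℕ := (Finset.range n).filter (fun j => L.getD j 0 ≤ Z) with hS
  have hScard : S.card = Q := by
    have hr : ((S.card : ℝ)) = ((Q : ℝ)) := by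
      rw [hS, hQ, ← Finset.sum_boole, ← Finset.sum_boole]
      exact fact0 (fun x => if x ≤ Z then (1:ℝ) else 0)
    exact_mod_cast hr
  have hA : ∀ j, j < n → (L.getD j 0 ≤ Z ↔ j < Q) := by
    intro j hj
    constructor
    · intro hz
      have hsub : Finset.range (j + 1) ⊆ S := by
        intro a ha
        rw [Finset.mem_range] at ha
        rw [hS, Finset.mem_filter, Finset.mem_range]
        have haj : a ≤ j := Nat.lt_succ_iff.mp ha
        exact ⟨lt_of_le_of_lt haj hj, le_trans (hle (lt_of_le_of_lt haj hj) hj haj) hz⟩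
      have := Finset.card_le_card hsub
      rw [Finset.card_range, hScard] at this
      exact this
    · intro hjQ
      by_contra hz
      push_neg at hz
      have hsub : S ⊆ Finset.range j := by
        intro a ha
        rw [hS, Finset.mem_filter, Finset.mem_range] at ha
        rw [Finset.mem_range]
        by_contra hja
        push_neg at hja
        exact absurd ha.2 (not_le.mpr (lt_of_lt_of_le hz (hle hj ha.1 hja)))
      have := Finset.card_le_card hsub
      rw [Finset.card_range, hScard] at this
      exact absurd hjQ (not_lt.mpr this)
  -- rewrite LHS as full sum with ell
  have step1 : ∑ j ∈ Finset.range Q, ((n : ℝ) - j) * L.getD j 0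
      = ∑ j ∈ Finset.range n, ((n : ℝ) - j) * (if L.getD j 0 ≤ Z then L.getD j 0 else 0) := by
    have e1 : ∑ j ∈ Finset.range Q, ((n : ℝ) - j) * L.getD j 0
        = ∑ j ∈ Finset.range Q, ((n : ℝ) - j) * (if L.getD j 0 ≤ Z then L.getD j 0 else 0) := by
      refine Finset.sum_congr rfl fun j hj => ?_
      rw [Finset.mem_range] at hj
      rw [if_pos ((hA j (lt_of_lt_of_le hj hQn)).mpr hj)]
    rw [e1]
    refine Finset.sum_subset (Finset.range_subset_range.mpr hQn) ?_
    intro j hjn hjQ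
    rw [Finset.mem_range] at hjn
    rw [Finset.mem_range] at hjQ
    rw [if_neg (fun hz => hjQ ((hA j hjn).mp hz)), mul_zero]
  -- the coefficient identity
  have step2 : ∀ j, j < n →
      ((n : ℝ) - j) = ∑ k ∈ Finset.range n, (if L.getD j 0 ≤ y k then (1:ℝ) else 0) := by
    intro j hj
    rw [← fact0 (fun x => if L.getD j 0 ≤ x then (1:ℝ) else 0)]
    have heq : ∀ j', j' ∈ Finset.range n →
        (if L.getD j 0 ≤ L.getD j' 0 then (1:ℝ) else 0) = (if j ≤ j' then (1:ℝ) else 0) := by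
      intro j' hj'
      rw [Finset.mem_range] at hj'
      congr 1
      apply propext
      constructor
      · intro h
        by_contra hc
        push_neg at hc
        exact absurd h (not_le.mpr (hlt hj' hj hc))
      · exact fun h => hle hj hj' h
    rw [Finset.sum_congr rfl heq, Finset.sum_boole]
    have : (Finset.range n).filter (fun j' => j ≤ j') = Finset.Ico j n := by
      ext a
      simp [Finset.mem_Ico, and_comm]
    rw [this, Nat.card_Ico, Nat.cast_sub hj.le]
  calc ∑ j ∈ Finset.range Q, ((n : ℝ) - j) * L.getD j 0
      = ∑ j ∈ Finset.range n, ((n : ℝ) - j) * (if L.getD j 0 ≤ Z then L.getD j 0 else 0) := step1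
    _ = ∑ j ∈ Finset.range n, ∑ k ∈ Finset.range n,
          (if L.getD j 0 ≤ Z then L.getD j 0 else 0) * (if L.getD j 0 ≤ y k then (1:ℝ) else 0) := by
        refine Finset.sum_congr rfl fun j hj => ?_
        rw [Finset.mem_range] at hj
        rw [step2 j hj, Finset.sum_mul]
        exact Finset.sum_congr rfl fun k _ => mul_comm _ _
    _ = ∑ k ∈ Finset.range n, ∑ j ∈ Finset.range n,
          (if L.getD j 0 ≤ Z then L.getD j 0 else 0) * (if L.getD j 0 ≤ y k then (1:ℝ) else 0) :=
        Finset.sum_comm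
    _ = ∑ k ∈ Finset.range n, ∑ i ∈ Finset.range n,
          (if y i ≤ Z then y i else 0) * (if y i ≤ y k then (1:ℝ) else 0) := by
        refine Finset.sum_congr rfl fun k _ => ?_
        exact fact0 (fun x => (if x ≤ Z then x else 0) * (if x ≤ y k then (1:ℝ) else 0))
    _ = ∑ i ∈ Finset.range n, ∑ k ∈ Finset.range n,
          (if y i ≤ Z then y i else 0) * (if y i ≤ y k then (1:ℝ) else 0) := Finset.sum_comm


lemma tendstoInMeasure_comp2' {Ω : Type*} [MeasureSpace Ω] [IsProbabilityMeasure (ℙ : Measure Ω)]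
    {f g : ℕ → Ω → ℝ} {a b : ℝ} {φ : ℝ → ℝ → ℝ}
    (hφ : ContinuousAt (fun p : ℝ × ℝ => φ p.1 p.2) (a, b))
    (hf : TendstoInMeasure ℙ f atTop (fun _ => a))
    (hg : TendstoInMeasure ℙ g atTop (fun _ => b)) :
    TendstoInMeasure ℙ (fun n ω => φ (f n ω) (g n ω)) atTop (fun _ => φ a b) := by
  rw [tendstoInMeasure_iff_dist] at hf hg ⊢
  intro ε hε
  obtain ⟨δ, hδ, hδ'⟩ := Metric.continuousAt_iff.mp hφ ε hε
  have hsub : ∀ n, {ω | ε ≤ dist (φ (f n ω) (g n ω)) (φ a b)} ⊆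
      {ω | δ / 2 ≤ dist (f n ω) a} ∪ {ω | δ / 2 ≤ dist (g n ω) b} := by
    intro n ω hω
    simp only [Set.mem_setOf_eq] at hω
    by_contra hc
    simp only [Set.mem_union, Set.mem_setOf_eq, not_or, not_le] at hc
    have hdist : dist ((f n ω, g n ω)) ((a, b)) < δ := by
      rw [Prod.dist_eq]
      exact max_lt (lt_of_lt_of_le hc.1 (by linarith)) (lt_of_lt_of_le hc.2 (by linarith))
    exact absurd hω (not_le.mpr (hδ' hdist))
  have hb : ∀ n, ℙ {ω | ε ≤ dist (φ (f n ω) (g n ω)) (φ a b)} ≤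
      ℙ {ω | δ / 2 ≤ dist (f n ω) a} + ℙ {ω | δ / 2 ≤ dist (g n ω) b} :=
    fun n => le_trans (measure_mono (hsub n)) (measure_union_le _ _)
  have h0 : Tendsto (fun n => ℙ {ω | δ / 2 ≤ dist (f n ω) a} +
      ℙ {ω | δ / 2 ≤ dist (g n ω) b}) atTop (𝓝 0) := by
    have := Tendsto.add (hf (δ / 2) (by linarith)) (hg (δ / 2) (by linarith))
    simpa using this
  exact tendsto_of_tendsto_of_tendsto_of_le_of_le tendsto_const_nhds h0
    (fun n => by simp) hb

lemma tendstoInMeasure_const_seq {Ω : Type*} [MeasureSpace Ω]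
    [IsProbabilityMeasure (ℙ : Measure Ω)] {c : ℕ → ℝ} {l : ℝ}
    (hc : Tendsto c atTop (𝓝 l)) :
    TendstoInMeasure ℙ (fun n (_ : Ω) => c n) atTop (fun _ => l) := by
  rw [tendstoInMeasure_iff_dist]
  intro ε hε
  have hev : ∀ᶠ n in atTop, ℙ {ω : Ω | ε ≤ dist (c n) l} = 0 := by
    obtain ⟨N, hN⟩ := Metric.tendsto_atTop.mp hc ε hε
    filter_upwards [eventually_ge_atTop N] with n hn
    have hn := hN n hn
    have : {ω : Ω | ε ≤ dist (c n) l} = ∅ := by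
      ext ω; simp only [Set.mem_setOf_eq, Set.mem_empty_iff_false, iff_false, not_le]
      exact hn
    simp [this]
  exact Tendsto.congr' (by filter_upwards [hev] with n hn; exact hn.symm) tendsto_const_nhds

lemma tendstoInMeasure_of_sq_integral {Ω : Type*} [MeasureSpace Ω]
    [IsProbabilityMeasure (ℙ : Measure Ω)] {f : ℕ → Ω → ℝ} {a : ℝ} {C : ℝ}
    (hint : ∀ n : ℕ, 1 ≤ n → Integrable (fun ω => (f n ω - a) ^ 2) ℙ)
    (hbound : ∀ n : ℕ, 1 ≤ n → ∫ ω, (f n ω - a) ^ 2 ∂ℙ ≤ C / n) :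
    TendstoInMeasure ℙ f atTop (fun _ => a) := by
  rw [tendstoInMeasure_iff_dist]
  intro ε hε
  have hε2 : (0:ℝ) < ε ^ 2 := by positivity
  have hset : ∀ n, {ω | ε ≤ dist (f n ω) a} = {ω | ε ^ 2 ≤ (f n ω - a) ^ 2} := by
    intro n
    ext ω
    simp only [Set.mem_setOf_eq, Real.dist_eq]
    constructor
    · intro h
      calc ε ^ 2 ≤ |f n ω - a| ^ 2 := pow_le_pow_left₀ hε.le h 2
        _ = (f n ω - a) ^ 2 := sq_abs _
    · intro h
      by_contra hc
      push_neg at hc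
      have h2 : |f n ω - a| ^ 2 < ε ^ 2 := by
        have := abs_nonneg (f n ω - a)
        nlinarith
      rw [sq_abs] at h2
      linarith
  have htoReal : ∀ n : ℕ, 1 ≤ n →
      (ℙ {ω | ε ≤ dist (f n ω) a}).toReal ≤ C / ε ^ 2 / n := by
    intro n hn
    have hmarkov := mul_meas_ge_le_integral_of_nonneg
      (ae_of_all ℙ (fun ω => sq_nonneg (f n ω - a))) (hint n hn) (ε ^ 2)
    rw [hset n]
    have h1 : ε ^ 2 * (ℙ {ω | ε ^ 2 ≤ (f n ω - a) ^ 2}).toReal ≤ C / n :=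
      le_trans hmarkov (hbound n hn)
    rw [div_div]
    rw [le_div_iff₀ (by positivity)]
    calc (ℙ {ω | ε ^ 2 ≤ (f n ω - a) ^ 2}).toReal * (ε ^ 2 * n)
        = (ε ^ 2 * (ℙ {ω | ε ^ 2 ≤ (f n ω - a) ^ 2}).toReal) * n := by ring
      _ ≤ (C / n) * n := by
          apply mul_le_mul_of_nonneg_right h1 (by positivity)
      _ = C := by
          field_simp
  have htR : Tendsto (fun n : ℕ => (ℙ {ω | ε ≤ dist (f n ω) a}).toReal) atTop (𝓝 0) := by
    apply tendsto_of_tendsto_of_tendsto_of_le_of_le' tendsto_const_nhds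
      (tendsto_const_div_atTop_nhds_zero_nat (C / ε ^ 2))
    · exact Eventually.of_forall (fun n => ENNReal.toReal_nonneg)
    · filter_upwards [eventually_ge_atTop 1] with n hn
      exact htoReal n hn
  have := (ENNReal.tendsto_toReal_iff
    (fun n => measure_ne_top ℙ _) (by simp : (0:ENNReal) ≠ ⊤)).mp (by simpa using htR)
  simpa using this


set_option maxHeartbeats 1000000 in
lemma vstat_var {Ω : Type*} [MeasureSpace Ω] [IsProbabilityMeasure (ℙ : Measure Ω)]
    (W : ℕ → ℕ → Ω → ℝ) (Zb EH EL : ℝ) (hZb : 0 < Zb)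
    (hWmeas : ∀ i k, Measurable (W i k))
    (hW0 : ∀ i k ω, 0 ≤ W i k ω ∧ W i k ω ≤ Zb)
    (hEH : ∀ i k, i ≠ k → ∫ ω, W i k ω = EH)
    (hEL : ∀ i, ∫ ω, W i i ω = EL)
    (hprod : ∀ i k i' k', i ≠ k → i' ≠ k' → i ≠ i' → i ≠ k' → k ≠ i' → k ≠ k' →
      ∫ ω, W i k ω * W i' k' ω = EH ^ 2) :
    ∀ n : ℕ, 1 ≤ n →
      ∫ ω, ((∑ p ∈ Finset.range n ×ˢ Finset.range n, W p.1 p.2 ω) / (n : ℝ) ^ 2 - EH) ^ 2 ∂ℙ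
        ≤ 10 * Zb ^ 2 / n := by
  -- integrability of the W's and their products
  have hWint : ∀ i k, Integrable (W i k) ℙ := by
    intro i k
    refine (integrable_const Zb).mono' (hWmeas i k).aestronglyMeasurable
      (ae_of_all _ fun ω => ?_)
    rw [Real.norm_eq_abs, abs_of_nonneg (hW0 i k ω).1]
    exact (hW0 i k ω).2
  have hWWint : ∀ (p q : ℕ × ℕ), Integrable (fun ω => W p.1 p.2 ω * W q.1 q.2 ω) ℙ := by
    intro p q
    refine (integrable_const (Zb ^ 2)).mono'
      (((hWmeas p.1 p.2).mul (hWmeas q.1 q.2)).aestronglyMeasurable)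
      (ae_of_all _ fun ω => ?_)
    rw [Real.norm_eq_abs, abs_of_nonneg (mul_nonneg (hW0 p.1 p.2 ω).1 (hW0 q.1 q.2 ω).1), sq]
    exact mul_le_mul (hW0 p.1 p.2 ω).2 (hW0 q.1 q.2 ω).2 (hW0 q.1 q.2 ω).1 hZb.le
  -- bounds on EH, EL
  have hEH0 : 0 ≤ EH := by
    rw [← hEH 0 1 (by norm_num)]
    exact integral_nonneg fun ω => (hW0 0 1 ω).1
  have hEHb : EH ≤ Zb := by
    rw [← hEH 0 1 (by norm_num)]
    calc ∫ ω, W 0 1 ω ≤ ∫ _ω, Zb ∂ℙ :=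
          integral_mono (hWint 0 1) (integrable_const _) (fun ω => (hW0 0 1 ω).2)
      _ = Zb := by simp
  have hEL0 : 0 ≤ EL := by
    rw [← hEL 0]
    exact integral_nonneg fun ω => (hW0 0 0 ω).1
  have hELb : EL ≤ Zb := by
    rw [← hEL 0]
    calc ∫ ω, W 0 0 ω ≤ ∫ _ω, Zb ∂ℙ :=
          integral_mono (hWint 0 0) (integrable_const _) (fun ω => (hW0 0 0 ω).2)
      _ = Zb := by simp
  -- the c coefficients
  set c : (ℕ × ℕ) → (ℕ × ℕ) → ℝ := fun p q => ∫ ω, W p.1 p.2 ω * W q.1 q.2 ω with hc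
  have hc_bd : ∀ p q, 0 ≤ c p q ∧ c p q ≤ Zb ^ 2 := by
    intro p q
    constructor
    · exact integral_nonneg fun ω => mul_nonneg (hW0 p.1 p.2 ω).1 (hW0 q.1 q.2 ω).1
    · calc c p q ≤ ∫ _ω, Zb ^ 2 ∂ℙ := by
            refine integral_mono (hWWint p q) (integrable_const _) (fun ω => ?_)
            rw [sq]
            exact mul_le_mul (hW0 p.1 p.2 ω).2 (hW0 q.1 q.2 ω).2 (hW0 q.1 q.2 ω).1 hZb.le
        _ = Zb ^ 2 := by simp
  intro n hn
  have hnR : (0 : ℝ) < n := by exact_mod_cast hn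
  set A : Finset ℕ := Finset.range n with hA
  set T : Finset (ℕ × ℕ) := A ×ˢ A with hT
  have hcardT : T.card = n * n := by
    rw [hT, Finset.card_product, hA, Finset.card_range]
  set Sn : Ω → ℝ := fun ω => ∑ p ∈ T, W p.1 p.2 ω with hSn
  have hSmeas : Measurable Sn := Finset.measurable_sum _ (fun p _ => hWmeas p.1 p.2)
  have hSint : Integrable Sn ℙ := integrable_finset_sum _ (fun p _ => hWint p.1 p.2)
  set Vn : Ω → ℝ := fun ω => Sn ω / (n : ℝ) ^ 2 with hVn
  have hVmeas : Measurable Vn := hSmeas.div_const _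
  have hVint : Integrable Vn ℙ := hSint.div_const _
  have hVbd : ∀ ω, 0 ≤ Vn ω ∧ Vn ω ≤ Zb := by
    intro ω
    have h1 : 0 ≤ Sn ω := Finset.sum_nonneg fun p _ => (hW0 p.1 p.2 ω).1
    have h2 : Sn ω ≤ (n : ℝ) ^ 2 * Zb := by
      calc Sn ω ≤ ∑ _p ∈ T, Zb := Finset.sum_le_sum fun p _ => (hW0 p.1 p.2 ω).2
        _ = (n : ℝ) ^ 2 * Zb := by
            rw [Finset.sum_const, hcardT, nsmul_eq_mul]
            push_cast
            ring
    constructor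
    · exact div_nonneg h1 (by positivity)
    · rw [hVn]
      rw [div_le_iff₀ (by positivity)]
      calc Sn ω ≤ (n : ℝ) ^ 2 * Zb := h2
        _ = Zb * (n : ℝ) ^ 2 := by ring
  have hV2int : Integrable (fun ω => (Vn ω) ^ 2) ℙ := by
    refine (integrable_const (Zb ^ 2)).mono' ((hVmeas.pow_const 2).aestronglyMeasurable)
      (ae_of_all _ fun ω => ?_)
    rw [Real.norm_eq_abs, abs_of_nonneg (sq_nonneg _)]
    exact pow_le_pow_left₀ (hVbd ω).1 (hVbd ω).2 2
  -- first moment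
  have hESn : ∫ ω, Sn ω ∂ℙ = (n : ℝ) ^ 2 * EH + (n : ℝ) * (EL - EH) := by
    rw [hSn]
    rw [integral_finset_sum _ (fun p _ => hWint p.1 p.2)]
    have hterm : ∀ p ∈ T, (∫ ω, W p.1 p.2 ω) = EH + (if p.1 = p.2 then EL - EH else 0) := by
      intro p _
      by_cases h : p.1 = p.2
      · rw [if_pos h]
        have : ∫ ω, W p.1 p.2 ω = EL := by
          rw [show p.1 = p.2 from h]
          exact hEL p.2
        rw [this]; ring
      · rw [if_neg h, add_zero]
        exact hEH _ _ h
    rw [Finset.sum_congr rfl hterm, Finset.sum_add_distrib]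
    have h1 : ∑ _p ∈ T, EH = (n : ℝ) ^ 2 * EH := by
      rw [Finset.sum_const, hcardT, nsmul_eq_mul]; push_cast; ring
    have h2 : ∑ p ∈ T, (if p.1 = p.2 then EL - EH else 0) = (n : ℝ) * (EL - EH) := by
      rw [hT, Finset.sum_product]
      have hinner : ∀ i ∈ A, ∑ k ∈ A, (if i = k then EL - EH else 0) = EL - EH := by
        intro i hi
        rw [Finset.sum_ite_eq A i (fun _ => EL - EH), if_pos hi]
      rw [Finset.sum_congr rfl hinner, Finset.sum_const, hA, Finset.card_range, nsmul_eq_mul]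
    rw [h1, h2]
  have hEVn : ∫ ω, Vn ω ∂ℙ = EH + (EL - EH) / n := by
    rw [hVn]
    simp only
    rw [integral_div, hESn]
    field_simp
  -- second moment
  have hESn2 : ∫ ω, (Sn ω) ^ 2 ∂ℙ = ∑ p ∈ T, ∑ q ∈ T, c p q := by
    have hptw : ∀ ω, (Sn ω) ^ 2 = ∑ p ∈ T, ∑ q ∈ T, W p.1 p.2 ω * W q.1 q.2 ω := by
      intro ω
      rw [sq, hSn]
      exact Finset.sum_mul_sum T T _ _
    simp_rw [hptw]
    rw [integral_finset_sum _ (fun p _ => integrable_finset_sum _ (fun q _ => hWWint p q))]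
    exact Finset.sum_congr rfl fun p _ => integral_finset_sum _ (fun q _ => hWWint p q)
  -- counting bad quadruples
  have hcdiff : ∀ p q : ℕ × ℕ, |c p q - EH ^ 2| ≤ Zb ^ 2 := by
    intro p q
    have h1 := (hc_bd p q).1
    have h2 := (hc_bd p q).2
    have h3 : EH ^ 2 ≤ Zb ^ 2 := pow_le_pow_left₀ hEH0 hEHb 2
    have h4 : 0 ≤ EH ^ 2 := sq_nonneg _
    rw [abs_le]
    constructor <;> nlinarith
  have hkey : |∑ p ∈ T, ∑ q ∈ T, (c p q - EH ^ 2)| ≤ 6 * (n : ℝ) ^ 3 * Zb ^ 2 := by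
    classical
    set P : (ℕ × ℕ) × (ℕ × ℕ) → Prop := fun r =>
      r.1.1 ≠ r.1.2 ∧ r.2.1 ≠ r.2.2 ∧ r.1.1 ≠ r.2.1 ∧ r.1.1 ≠ r.2.2 ∧
        r.1.2 ≠ r.2.1 ∧ r.1.2 ≠ r.2.2 with hP
    have hgood : ∀ r : (ℕ × ℕ) × (ℕ × ℕ), P r → c r.1 r.2 = EH ^ 2 := by
      rintro ⟨⟨i, k⟩, ⟨i', k'⟩⟩ hr
      obtain ⟨h1, h2, h3, h4, h5, h6⟩ := hr
      exact hprod i k i' k' h1 h2 h3 h4 h5 h6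
    -- the bad set and its cardinality
    set bad : Finset ((ℕ × ℕ) × (ℕ × ℕ)) := (T ×ˢ T).filter (fun r => ¬ P r) with hbad
    have himg : ∀ (ψ : ℕ × ℕ × ℕ → (ℕ × ℕ) × (ℕ × ℕ)) (S : Finset ((ℕ × ℕ) × (ℕ × ℕ))),
        S ⊆ (A ×ˢ A ×ˢ A).image ψ → S.card ≤ n ^ 3 := by
      intro ψ S hsub
      calc S.card ≤ ((A ×ˢ A ×ˢ A).image ψ).card := Finset.card_le_card hsub
        _ ≤ (A ×ˢ A ×ˢ A).card := Finset.card_image_le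
        _ = n ^ 3 := by
            rw [Finset.card_product, Finset.card_product, hA, Finset.card_range]; ring
    have hbadcard : bad.card ≤ 6 * n ^ 3 := by
      set S1 := (T ×ˢ T).filter (fun r => r.1.1 = r.1.2) with hS1
      set S2 := (T ×ˢ T).filter (fun r => r.2.1 = r.2.2) with hS2
      set S3 := (T ×ˢ T).filter (fun r => r.1.1 = r.2.1) with hS3
      set S4 := (T ×ˢ T).filter (fun r => r.1.1 = r.2.2) with hS4
      set S5 := (T ×ˢ T).filter (fun r => r.1.2 = r.2.1) with hS5
      set S6 := (T ×ˢ T).filter (fun r => r.1.2 = r.2.2) with hS6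
      have hsubU : bad ⊆ S1 ∪ S2 ∪ S3 ∪ S4 ∪ S5 ∪ S6 := by
        intro r hr
        rw [hbad, Finset.mem_filter] at hr
        obtain ⟨hrT, hrP⟩ := hr
        simp only [Finset.mem_union, hS1, hS2, hS3, hS4, hS5, hS6, Finset.mem_filter]
        by_cases h1 : r.1.1 = r.1.2
        · exact Or.inl (Or.inl (Or.inl (Or.inl (Or.inl ⟨hrT, h1⟩))))
        by_cases h2 : r.2.1 = r.2.2
        · exact Or.inl (Or.inl (Or.inl (Or.inl (Or.inr ⟨hrT, h2⟩))))
        by_cases h3 : r.1.1 = r.2.1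
        · exact Or.inl (Or.inl (Or.inl (Or.inr ⟨hrT, h3⟩)))
        by_cases h4 : r.1.1 = r.2.2
        · exact Or.inl (Or.inl (Or.inr ⟨hrT, h4⟩))
        by_cases h5 : r.1.2 = r.2.1
        · exact Or.inl (Or.inr ⟨hrT, h5⟩)
        by_cases h6 : r.1.2 = r.2.2
        · exact Or.inr ⟨hrT, h6⟩
        exact absurd (show P r from ⟨h1, h2, h3, h4, h5, h6⟩) hrP
      have hmem : ∀ r : (ℕ × ℕ) × (ℕ × ℕ), r ∈ T ×ˢ T →
          r.1.1 ∈ A ∧ r.1.2 ∈ A ∧ r.2.1 ∈ A ∧ r.2.2 ∈ A := by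
        intro r hr
        rw [Finset.mem_product] at hr
        obtain ⟨h1, h2⟩ := hr
        rw [hT, Finset.mem_product] at h1
        rw [hT, Finset.mem_product] at h2
        exact ⟨h1.1, h1.2, h2.1, h2.2⟩
      have hc1 : S1.card ≤ n ^ 3 := by
        refine himg (fun t => ((t.1, t.1), (t.2.1, t.2.2))) _ ?_
        rintro ⟨⟨i, k⟩, ⟨i', k'⟩⟩ hr
        rw [hS1, Finset.mem_filter] at hr
        obtain ⟨hm1, hm2, hm3, hm4⟩ := hmem _ hr.1
        have heq : i = k := hr.2
        refine Finset.mem_image.mpr ⟨(i, i', k'), ?_, ?_⟩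
        · simp only [Finset.mem_product]; exact ⟨hm1, hm3, hm4⟩
        · show (((i, i), (i', k')) : (ℕ × ℕ) × (ℕ × ℕ)) = ((i, k), (i', k'))
          rw [heq]
      have hc2 : S2.card ≤ n ^ 3 := by
        refine himg (fun t => ((t.1, t.2.1), (t.2.2, t.2.2))) _ ?_
        rintro ⟨⟨i, k⟩, ⟨i', k'⟩⟩ hr
        rw [hS2, Finset.mem_filter] at hr
        obtain ⟨hm1, hm2, hm3, hm4⟩ := hmem _ hr.1
        have heq : i' = k' := hr.2
        refine Finset.mem_image.mpr ⟨(i, k, i'), ?_, ?_⟩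
        · simp only [Finset.mem_product]; exact ⟨hm1, hm2, hm3⟩
        · show (((i, k), (i', i')) : (ℕ × ℕ) × (ℕ × ℕ)) = ((i, k), (i', k'))
          rw [heq]
      have hc3 : S3.card ≤ n ^ 3 := by
        refine himg (fun t => ((t.1, t.2.1), (t.1, t.2.2))) _ ?_
        rintro ⟨⟨i, k⟩, ⟨i', k'⟩⟩ hr
        rw [hS3, Finset.mem_filter] at hr
        obtain ⟨hm1, hm2, hm3, hm4⟩ := hmem _ hr.1
        have heq : i = i' := hr.2
        refine Finset.mem_image.mpr ⟨(i, k, k'), ?_, ?_⟩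
        · simp only [Finset.mem_product]; exact ⟨hm1, hm2, hm4⟩
        · show (((i, k), (i, k')) : (ℕ × ℕ) × (ℕ × ℕ)) = ((i, k), (i', k'))
          rw [heq]
      have hc4 : S4.card ≤ n ^ 3 := by
        refine himg (fun t => ((t.1, t.2.1), (t.2.2, t.1))) _ ?_
        rintro ⟨⟨i, k⟩, ⟨i', k'⟩⟩ hr
        rw [hS4, Finset.mem_filter] at hr
        obtain ⟨hm1, hm2, hm3, hm4⟩ := hmem _ hr.1
        have heq : i = k' := hr.2
        refine Finset.mem_image.mpr ⟨(i, k, i'), ?_, ?_⟩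
        · simp only [Finset.mem_product]; exact ⟨hm1, hm2, hm3⟩
        · show (((i, k), (i', i)) : (ℕ × ℕ) × (ℕ × ℕ)) = ((i, k), (i', k'))
          rw [heq]
      have hc5 : S5.card ≤ n ^ 3 := by
        refine himg (fun t => ((t.1, t.2.1), (t.2.1, t.2.2))) _ ?_
        rintro ⟨⟨i, k⟩, ⟨i', k'⟩⟩ hr
        rw [hS5, Finset.mem_filter] at hr
        obtain ⟨hm1, hm2, hm3, hm4⟩ := hmem _ hr.1
        have heq : k = i' := hr.2
        refine Finset.mem_image.mpr ⟨(i, k, k'), ?_, ?_⟩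
        · simp only [Finset.mem_product]; exact ⟨hm1, hm2, hm4⟩
        · show (((i, k), (k, k')) : (ℕ × ℕ) × (ℕ × ℕ)) = ((i, k), (i', k'))
          rw [heq]
      have hc6 : S6.card ≤ n ^ 3 := by
        refine himg (fun t => ((t.1, t.2.1), (t.2.2, t.2.1))) _ ?_
        rintro ⟨⟨i, k⟩, ⟨i', k'⟩⟩ hr
        rw [hS6, Finset.mem_filter] at hr
        obtain ⟨hm1, hm2, hm3, hm4⟩ := hmem _ hr.1
        have heq : k = k' := hr.2
        refine Finset.mem_image.mpr ⟨(i, k, i'), ?_, ?_⟩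
        · simp only [Finset.mem_product]; exact ⟨hm1, hm2, hm3⟩
        · show (((i, k), (i', k)) : (ℕ × ℕ) × (ℕ × ℕ)) = ((i, k), (i', k'))
          rw [heq]
      calc bad.card ≤ (S1 ∪ S2 ∪ S3 ∪ S4 ∪ S5 ∪ S6).card := Finset.card_le_card hsubU
        _ ≤ (S1 ∪ S2 ∪ S3 ∪ S4 ∪ S5).card + S6.card := Finset.card_union_le _ _
        _ ≤ ((S1 ∪ S2 ∪ S3 ∪ S4).card + S5.card) + S6.card := by
            exact add_le_add_left (Finset.card_union_le _ _) _
        _ ≤ (((S1 ∪ S2 ∪ S3).card + S4.card) + S5.card) + S6.card := by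
            exact add_le_add_left (add_le_add_left (Finset.card_union_le _ _) _) _
        _ ≤ ((((S1 ∪ S2).card + S3.card) + S4.card) + S5.card) + S6.card := by
            exact add_le_add_left (add_le_add_left (add_le_add_left
              (Finset.card_union_le _ _) _) _) _
        _ ≤ ((((S1.card + S2.card) + S3.card) + S4.card) + S5.card) + S6.card := by
            exact add_le_add_left (add_le_add_left (add_le_add_left (add_le_add_left
              (Finset.card_union_le _ _) _) _) _) _
        _ ≤ 6 * n ^ 3 := by omega
    -- now the sum bound
    have hsum_eq : ∑ p ∈ T, ∑ q ∈ T, (c p q - EH ^ 2)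
        = ∑ r ∈ T ×ˢ T, (c r.1 r.2 - EH ^ 2) :=
      (Finset.sum_product' T T (fun p q => c p q - EH ^ 2)).symm
    rw [hsum_eq]
    calc |∑ r ∈ T ×ˢ T, (c r.1 r.2 - EH ^ 2)| ≤ ∑ r ∈ T ×ˢ T, |c r.1 r.2 - EH ^ 2| :=
          Finset.abs_sum_le_sum_abs _ _
      _ = ∑ r ∈ bad, |c r.1 r.2 - EH ^ 2| := by
          rw [← Finset.sum_filter_add_sum_filter_not (T ×ˢ T) (fun r => ¬ P r)]
          have hzero : ∑ r ∈ (T ×ˢ T).filter (fun r => ¬ ¬ P r), |c r.1 r.2 - EH ^ 2| = 0 := by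
            apply Finset.sum_eq_zero
            intro r hr
            rw [Finset.mem_filter] at hr
            rw [hgood r (not_not.mp hr.2), sub_self, abs_zero]
          rw [hzero, add_zero, hbad]
      _ ≤ ∑ _r ∈ bad, Zb ^ 2 := Finset.sum_le_sum fun r _ => hcdiff r.1 r.2
      _ = bad.card * Zb ^ 2 := by rw [Finset.sum_const, nsmul_eq_mul]
      _ ≤ 6 * (n : ℝ) ^ 3 * Zb ^ 2 := by
          apply mul_le_mul_of_nonneg_right _ (by positivity)
          calc (bad.card : ℝ) ≤ ((6 * n ^ 3 : ℕ) : ℝ) := by exact_mod_cast hbadcard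
            _ = 6 * (n : ℝ) ^ 3 := by push_cast; ring
  -- assemble
  have hsumEH : ∑ _p ∈ T, ∑ _q ∈ T, EH ^ 2 = (n : ℝ) ^ 4 * EH ^ 2 := by
    rw [Finset.sum_const, Finset.sum_const, hcardT, nsmul_eq_mul, nsmul_eq_mul]
    push_cast
    ring
  have hSn2_le : ∫ ω, (Sn ω) ^ 2 ∂ℙ ≤ (n : ℝ) ^ 4 * EH ^ 2 + 6 * (n : ℝ) ^ 3 * Zb ^ 2 := by
    rw [hESn2]
    have h1 : ∑ p ∈ T, ∑ q ∈ T, c p q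
        = (∑ p ∈ T, ∑ q ∈ T, (c p q - EH ^ 2)) + (n : ℝ) ^ 4 * EH ^ 2 := by
      rw [← hsumEH]
      rw [← Finset.sum_add_distrib]
      refine Finset.sum_congr rfl fun p _ => ?_
      rw [← Finset.sum_add_distrib]
      refine Finset.sum_congr rfl fun q _ => by ring
    rw [h1]
    have := (abs_le.mp hkey).2
    linarith
  have hV2_le : ∫ ω, (Vn ω) ^ 2 ∂ℙ ≤ EH ^ 2 + 6 * Zb ^ 2 / n := by
    have hVeq : ∀ ω, (Vn ω) ^ 2 = (Sn ω) ^ 2 / ((n : ℝ) ^ 2) ^ 2 := by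
      intro ω
      rw [hVn]
      rw [div_pow]
    simp_rw [hVeq]
    rw [integral_div]
    rw [div_le_iff₀ (by positivity)]
    calc ∫ ω, (Sn ω) ^ 2 ∂ℙ ≤ (n : ℝ) ^ 4 * EH ^ 2 + 6 * (n : ℝ) ^ 3 * Zb ^ 2 := hSn2_le
      _ = (EH ^ 2 + 6 * Zb ^ 2 / n) * ((n : ℝ) ^ 2) ^ 2 := by
          field_simp
  -- final expansion
  have hexp : ∫ ω, (Vn ω - EH) ^ 2 ∂ℙ
      = (∫ ω, (Vn ω) ^ 2 ∂ℙ) - 2 * EH * (∫ ω, Vn ω ∂ℙ) + EH ^ 2 := by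
    have hptw : ∀ ω, (Vn ω - EH) ^ 2 = ((Vn ω) ^ 2 - 2 * EH * Vn ω) + EH ^ 2 := by
      intro ω; ring
    simp_rw [hptw]
    have hint3 : Integrable (fun ω => 2 * EH * Vn ω) ℙ := hVint.const_mul (2 * EH)
    have hint1 : Integrable (fun ω => Vn ω ^ 2 - 2 * EH * Vn ω) ℙ := hV2int.sub hint3
    rw [integral_add hint1 (integrable_const _)]
    rw [integral_sub hV2int hint3]
    rw [integral_const_mul, integral_const]
    simp [measure_univ]
  have hgoal : ∫ ω, (Vn ω - EH) ^ 2 ∂ℙ ≤ 10 * Zb ^ 2 / n := by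
    rw [hexp, hEVn]
    set u : ℝ := ((n : ℝ))⁻¹ with hu
    have hu0 : 0 < u := by positivity
    have hdiv1 : (EL - EH) / (n : ℝ) = (EL - EH) * u := by rw [hu, div_eq_mul_inv]
    have hdiv2 : 6 * Zb ^ 2 / (n : ℝ) = 6 * Zb ^ 2 * u := by rw [hu, div_eq_mul_inv]
    have hdiv3 : 10 * Zb ^ 2 / (n : ℝ) = 10 * Zb ^ 2 * u := by rw [hu, div_eq_mul_inv]
    rw [hdiv1, hdiv3]
    rw [hdiv2] at hV2_le
    nlinarith [mul_nonneg (mul_nonneg hEH0 hEL0) hu0.le,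
      mul_nonneg (mul_nonneg hEH0 hEH0) hu0.le,
      mul_le_mul_of_nonneg_right (pow_le_pow_left₀ hEH0 hEHb 2) hu0.le,
      sq_nonneg (EH - EL)]
  exact hgoal


lemma atom_zero {Ω : Type*} [MeasureSpace Ω] [IsProbabilityMeasure (ℙ : Measure Ω)]
    (X0 : Ω → ℝ) (F : ℝ → ℝ) (hMeas0 : Measurable X0)
    (hF : ∀ x, F x = (ℙ {ω | X0 ω ≤ x}).toReal) (hFcont : Continuous F) (x : ℝ) :
    ℙ {ω | X0 ω = x} = 0 := by
  set p : ENNReal := ℙ {ω | X0 ω = x} with hp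
  have key : ∀ y, y < x → p.toReal ≤ F x - F y := by
    intro y hy
    have hdisj : Disjoint {ω | X0 ω ≤ y} {ω | X0 ω = x} := by
      rw [Set.disjoint_left]
      intro ω h1 h2
      rw [Set.mem_setOf_eq] at h1 h2
      rw [h2] at h1
      linarith
    have hunion : ℙ {ω | X0 ω ≤ y} + p = ℙ ({ω | X0 ω ≤ y} ∪ {ω | X0 ω = x}) := by
      rw [measure_union hdisj (measurableSet_eq_fun hMeas0 measurable_const)]
    have hsub : ({ω | X0 ω ≤ y} ∪ {ω | X0 ω = x}) ⊆ {ω | X0 ω ≤ x} := by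
      intro ω hω
      rcases hω with h | h
      · exact le_trans h hy.le
      · exact le_of_eq h
    have hle : ℙ {ω | X0 ω ≤ y} + p ≤ ℙ {ω | X0 ω ≤ x} := by
      rw [hunion]; exact measure_mono hsub
    have h1 : (ℙ {ω | X0 ω ≤ y} + p).toReal ≤ (ℙ {ω | X0 ω ≤ x}).toReal :=
      ENNReal.toReal_mono (measure_ne_top _ _) hle
    rw [ENNReal.toReal_add (measure_ne_top _ _) (measure_ne_top _ _)] at h1
    rw [hF x, hF y]
    linarith
  have hlim : Tendsto (fun k : ℕ => F x - F (x - 1 / (k + 1))) atTop (𝓝 0) := by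
    have h1 : Tendsto (fun k : ℕ => x - 1 / ((k : ℝ) + 1)) atTop (𝓝 x) := by
      have := tendsto_one_div_add_atTop_nhds_zero_nat (𝕜 := ℝ)
      have h2 : Tendsto (fun _ : ℕ => x) atTop (𝓝 x) := tendsto_const_nhds
      simpa using h2.sub this
    have h3 := (hFcont.tendsto x).comp h1
    have h5 : Tendsto (fun _ : ℕ => F x) atTop (𝓝 (F x)) := tendsto_const_nhds
    have h4 := h5.sub h3
    simpa using h4
  have hle0 : p.toReal ≤ 0 := by
    refine le_of_tendsto_of_tendsto tendsto_const_nhds hlim ?_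
    filter_upwards with k
    exact key _ (by
      have : (0:ℝ) < 1 / ((k : ℝ) + 1) := by positivity
      linarith)
  have h0 : p.toReal = 0 := le_antisymm hle0 ENNReal.toReal_nonneg
  have := (ENNReal.toReal_eq_zero_iff p).mp h0
  rcases this with h | h
  · exact h
  · exact absurd h (measure_ne_top _ _)

/-- Takayama's statistic converges in probability to the Takayama
parameter `T = 1 − (2/μ) ∫ x (1 − F(x)) 1_{(x ≤ Z)} dF(x)`. -/
theorem statement2 {Ω : Type*} [MeasureSpace Ω] [IsProbabilityMeasure (ℙ : Measure Ω)]
    (X : ℕ → Ω → ℝ) (F : ℝ → ℝ) (Z : ℝ) (hZ : 0 < Z)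
    (hMeas : ∀ i, Measurable (X i))
    (hIndep : iIndepFun X ℙ)
    (hIdent : ∀ i, IdentDistrib (X i) (X 0) ℙ ℙ)
    (hNonneg : ∀ i ω, 0 ≤ X i ω)
    (hF : ∀ x, F x = (ℙ {ω | X 0 ω ≤ x}).toReal)
    (hFcont : Continuous F)
    (hFmono : StrictMonoOn F (Set.Ici (0 : ℝ)))
    (hFinv1 : ∀ x ≥ (0 : ℝ), Finv F (F x) = x)
    (hFinv2 : ∀ s ∈ Set.Ioo (0 : ℝ) 1, F (Finv F s) = s)
    (hIntX : Integrable (X 0) ℙ)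
    (hIntX2 : Integrable (fun ω => (X 0 ω) ^ 2) ℙ)
    (hμpos : 0 < ∫ ω, X 0 ω) :
    TendstoInMeasure ℙ (fun (n : ℕ) (ω : Ω) => takayamaStat X Z n ω) atTop
      (fun _ => 1 - 2 / (∫ ω', X 0 ω') * ∫ ω', hFun F Z (X 0 ω')) := by
  classical
  set μR : ℝ := ∫ ω, X 0 ω with hμR
  set EH : ℝ := ∫ ω', hFun F Z (X 0 ω') with hEHdef
  -- the clamped kernel
  set g1 : ℝ → ℝ := fun a => if 0 ≤ a ∧ a ≤ Z then a else 0 with hg1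
  set g2 : ℝ → ℝ → ℝ := fun a b => g1 a * (if a ≤ b then 1 else 0) with hg2
  have hg1meas : Measurable g1 := by
    have : MeasurableSet {a : ℝ | 0 ≤ a ∧ a ≤ Z} := by
      have : {a : ℝ | 0 ≤ a ∧ a ≤ Z} = Set.Icc 0 Z := rfl
      rw [this]; exact measurableSet_Icc
    exact Measurable.ite this measurable_id measurable_const
  have hg2meas : Measurable (fun p : ℝ × ℝ => g2 p.1 p.2) := by
    refine Measurable.mul (hg1meas.comp measurable_fst) ?_
    exact Measurable.ite (measurableSet_le measurable_fst measurable_snd)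
      measurable_const measurable_const
  have hg1bd : ∀ a, 0 ≤ g1 a ∧ g1 a ≤ Z := by
    intro a
    by_cases h : 0 ≤ a ∧ a ≤ Z
    · have h2 : g1 a = a := if_pos h
      rw [h2]; exact ⟨h.1, h.2⟩
    · have h2 : g1 a = 0 := if_neg h
      rw [h2]; exact ⟨le_rfl, hZ.le⟩
  have hg2bd : ∀ a b, 0 ≤ g2 a b ∧ g2 a b ≤ Z := by
    intro a b
    by_cases h : a ≤ b
    · have h2 : g2 a b = g1 a := by
        have h3 : (if a ≤ b then (1:ℝ) else 0) = 1 := if_pos h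
        calc g2 a b = g1 a * (if a ≤ b then (1:ℝ) else 0) := rfl
          _ = g1 a * 1 := by rw [h3]
          _ = g1 a := mul_one _
      rw [h2]; exact hg1bd a
    · have h2 : g2 a b = 0 := by
        have h3 : (if a ≤ b then (1:ℝ) else 0) = 0 := if_neg h
        calc g2 a b = g1 a * (if a ≤ b then (1:ℝ) else 0) := rfl
          _ = g1 a * 0 := by rw [h3]
          _ = 0 := mul_zero _
      rw [h2]; exact ⟨le_rfl, hZ.le⟩
  -- the V-statistic kernel applied to the sample
  set W : ℕ → ℕ → Ω → ℝ := fun i k ω => g2 (X i ω) (X k ω) with hW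
  have hWmeas : ∀ i k, Measurable (W i k) :=
    fun i k => hg2meas.comp ((hMeas i).prodMk (hMeas k))
  have hW0 : ∀ i k ω, 0 ≤ W i k ω ∧ W i k ω ≤ Z := fun i k ω => hg2bd _ _
  have hWint : ∀ i k, Integrable (W i k) ℙ := by
    intro i k
    refine (integrable_const Z).mono' (hWmeas i k).aestronglyMeasurable
      (ae_of_all _ fun ω => ?_)
    rw [Real.norm_eq_abs, abs_of_nonneg (hW0 i k ω).1]
    exact (hW0 i k ω).2
  -- the law of X 0
  set ν : Measure ℝ := Measure.map (X 0) ℙ with hν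
  have hprobν : IsProbabilityMeasure ν := Measure.isProbabilityMeasure_map (hMeas 0).aemeasurable
  have hmapX : ∀ i, Measure.map (X i) ℙ = ν := fun i => (hIdent i).map_eq
  have hνatom : ∀ a : ℝ, ν {a} = 0 := by
    intro a
    rw [hν, Measure.map_apply (hMeas 0) (measurableSet_singleton a)]
    exact atom_zero (X 0) F (hMeas 0) hF hFcont a
  have hIic : ∀ a : ℝ, (ν (Set.Iic a)).toReal = F a := by
    intro a
    rw [hν, Measure.map_apply (hMeas 0) measurableSet_Iic, hF a]
    rfl
  have hIci : ∀ a : ℝ, (ν (Set.Ici a)).toReal = 1 - F a := by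
    intro a
    have h2 : ν (Set.Ici a) = ν (Set.Ioi a) := by
      have hsplit : Set.Ici a = {a} ∪ Set.Ioi a := by
        ext t
        simp only [Set.mem_Ici, Set.mem_union, Set.mem_singleton_iff, Set.mem_Ioi]
        constructor
        · intro h; rcases eq_or_lt_of_le h with h' | h'
          · exact Or.inl h'.symm
          · exact Or.inr h'
        · intro h; rcases h with h | h
          · exact h.ge
          · exact h.le
      rw [hsplit, measure_union (by simp) measurableSet_Ioi, hνatom, zero_add]
    have h3 : ν (Set.Ioi a) = 1 - ν (Set.Iic a) := by
      rw [← Set.compl_Iic]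
      exact prob_compl_eq_one_sub measurableSet_Iic
    rw [h2, h3, ENNReal.toReal_sub_of_le prob_le_one ENNReal.one_ne_top, ENNReal.toReal_one,
      hIic]
  -- the joint law of two distinct coordinates
  have hjoint : ∀ i k, i ≠ k → Measure.map (fun ω => (X i ω, X k ω)) ℙ = ν.prod ν := by
    intro i k hik
    have h := (indepFun_iff_map_prod_eq_prod_map_map
      ((hMeas i).aemeasurable) ((hMeas k).aemeasurable)).mp (hIndep.indepFun hik)
    rw [h, hmapX i, hmapX k]
  have hprodint : Integrable (fun p : ℝ × ℝ => g2 p.1 p.2) (ν.prod ν) := by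
    refine (integrable_const Z).mono' hg2meas.aestronglyMeasurable
      (ae_of_all _ fun p => ?_)
    rw [Real.norm_eq_abs, abs_of_nonneg (hg2bd p.1 p.2).1]
    exact (hg2bd p.1 p.2).2
  -- E[W i k] for i ≠ k
  have hg1Fmeas : Measurable (fun a : ℝ => g1 a * (1 - F a)) :=
    hg1meas.mul (measurable_const.sub hFcont.measurable)
  have hEHik : ∀ i k, i ≠ k → ∫ ω, W i k ω = EH := by
    intro i k hik
    have hpairmeas : Measurable (fun ω => (X i ω, X k ω)) := (hMeas i).prodMk (hMeas k)
    have h1 : ∫ ω, W i k ω = ∫ p, g2 p.1 p.2 ∂(Measure.map (fun ω => (X i ω, X k ω)) ℙ) := by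
      rw [integral_map hpairmeas.aemeasurable hg2meas.aestronglyMeasurable]
    rw [h1, hjoint i k hik, integral_prod _ hprodint]
    have hinner : ∀ a : ℝ, ∫ b, g2 a b ∂ν = g1 a * (1 - F a) := by
      intro a
      have heq : (fun b => g2 a b) = fun b => g1 a * (Set.Ici a).indicator (fun _ => (1:ℝ)) b := by
        funext b
        rw [Set.indicator_apply]
        simp only [Set.mem_Ici, hg2]
      rw [heq, integral_const_mul, integral_indicator_const (1:ℝ) measurableSet_Ici,
        smul_eq_mul, mul_one, measureReal_def, hIci]
    have h2 : ∫ a, (∫ b, g2 (a, b).1 (a, b).2 ∂ν) ∂ν = ∫ a, g1 a * (1 - F a) ∂ν := by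
      refine integral_congr_ae (ae_of_all _ fun a => ?_)
      simpa using hinner a
    rw [h2, hν, integral_map (hMeas 0).aemeasurable hg1Fmeas.aestronglyMeasurable]
    refine integral_congr_ae (ae_of_all _ fun ω => ?_)
    have hx := hNonneg 0 ω
    by_cases hxz : X 0 ω ≤ Z
    · simp [hg1, hFun, hxz, hx]
    · simp [hg1, hFun, hxz]
  -- E[W i i]
  set EL : ℝ := ∫ ω, g1 (X 0 ω) with hELdef
  have hWii : ∀ i ω, W i i ω = g1 (X i ω) := by
    intro i ω
    rw [hW]
    simp [hg2]
  have hELi : ∀ i, ∫ ω, W i i ω = EL := by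
    intro i
    have h1 : ∫ ω, W i i ω = ∫ ω, g1 (X i ω) := by
      refine integral_congr_ae (ae_of_all _ fun ω => hWii i ω)
    rw [h1, hELdef]
    have := ((hIdent i).comp hg1meas).integral_eq
    simpa [Function.comp] using this
  -- E of products over disjoint pairs
  have hprodW : ∀ i k i' k', i ≠ k → i' ≠ k' → i ≠ i' → i ≠ k' → k ≠ i' → k ≠ k' →
      ∫ ω, W i k ω * W i' k' ω = EH ^ 2 := by
    intro i k i' k' hik hi'k' hii' hik' hki' hkk'
    have hpair := hIndep.indepFun_prodMk_prodMk hMeas i k i' k' hii' hik' hki' hkk'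
    have hindepW : IndepFun (W i k) (W i' k') ℙ := by
      have := hpair.comp hg2meas hg2meas
      exact this
    have := hindepW.integral_mul_eq_mul_integral (hWint i k).1 (hWint i' k').1
    have heq : ∫ ω, W i k ω * W i' k' ω = ∫ ω, (W i k * W i' k') ω := by
      refine integral_congr_ae (ae_of_all _ fun ω => ?_)
      simp [Pi.mul_apply]
    rw [heq, this, hEHik i k hik, hEHik i' k' hi'k', sq]
  -- the variance bound
  have hvar := vstat_var W Z EH EL hZ hWmeas (fun i k ω => hW0 i k ω) hEHik hELi hprodW
  -- the V statistic
  set Vn : ℕ → Ω → ℝ :=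
    fun n ω => (∑ p ∈ Finset.range n ×ˢ Finset.range n, W p.1 p.2 ω) / (n : ℝ) ^ 2 with hVn
  have hVnmeas : ∀ n, Measurable (Vn n) :=
    fun n => (Finset.measurable_sum _ (fun p _ => hWmeas p.1 p.2)).div_const _
  have hVnbd : ∀ n, 1 ≤ n → ∀ ω, 0 ≤ Vn n ω ∧ Vn n ω ≤ Z := by
    intro n hn ω
    have hnR : (0:ℝ) < n := by exact_mod_cast hn
    have h1 : 0 ≤ ∑ p ∈ Finset.range n ×ˢ Finset.range n, W p.1 p.2 ω :=
      Finset.sum_nonneg fun p _ => (hW0 p.1 p.2 ω).1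
    have h2 : ∑ p ∈ Finset.range n ×ˢ Finset.range n, W p.1 p.2 ω ≤ Z * (n : ℝ) ^ 2 := by
      calc ∑ p ∈ Finset.range n ×ˢ Finset.range n, W p.1 p.2 ω
          ≤ ∑ _p ∈ Finset.range n ×ˢ Finset.range n, Z :=
            Finset.sum_le_sum fun p _ => (hW0 p.1 p.2 ω).2
        _ = Z * (n : ℝ) ^ 2 := by
            rw [Finset.sum_const, Finset.card_product, Finset.card_range, nsmul_eq_mul]
            push_cast; ring
    constructor
    · exact div_nonneg h1 (by positivity)
    · rw [hVn]
      exact (div_le_iff₀ (by positivity)).mpr (by linarith)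
  have hsqint : ∀ n : ℕ, 1 ≤ n → Integrable (fun ω => (Vn n ω - EH) ^ 2) ℙ := by
    intro n hn
    refine (integrable_const ((Z + |EH|) ^ 2)).mono'
      ((((hVnmeas n).sub_const EH).pow_const 2).aestronglyMeasurable)
      (ae_of_all _ fun ω => ?_)
    rw [Real.norm_eq_abs, abs_of_nonneg (sq_nonneg _)]
    have h1 := (hVnbd n hn ω).1
    have h2 := (hVnbd n hn ω).2
    nlinarith [le_abs_self EH, neg_abs_le EH, abs_nonneg EH]
  have hVtm : TendstoInMeasure ℙ Vn atTop (fun _ => EH) :=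
    tendstoInMeasure_of_sq_integral hsqint (fun n hn => hvar n hn)
  -- the sample mean
  set μn : ℕ → Ω → ℝ := fun n ω => (∑ i ∈ Finset.range n, X i ω) / n with hμn
  have hμtm : TendstoInMeasure ℙ μn atTop (fun _ => μR) := by
    refine tendstoInMeasure_of_tendsto_ae
      (fun n => ((Finset.measurable_sum _ (fun i _ => hMeas i)).div_const _).aestronglyMeasurable)
      ?_
    have := strong_law_ae_real X hIntX (fun i j hij => hIndep.indepFun hij) hIdent
    filter_upwards [this] with ω hω
    exact hω
  -- composition
  have hc1 : ContinuousAt (fun p : ℝ × ℝ => 2 / p.1 * p.2) (μR, EH) := by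
    have h1 : ContinuousAt (fun p : ℝ × ℝ => (2:ℝ) / p.1) (μR, EH) :=
      continuousAt_const.div continuousAt_fst (ne_of_gt hμpos)
    exact h1.mul continuousAt_snd
  have hstep1 : TendstoInMeasure ℙ (fun n ω => 2 / μn n ω * Vn n ω) atTop
      (fun _ => 2 / μR * EH) := tendstoInMeasure_comp2' (φ := fun m v => 2 / m * v) hc1 hμtm hVtm
  have hconst : TendstoInMeasure ℙ (fun (n : ℕ) (_ : Ω) => 1 + 1 / (n : ℝ)) atTop
      (fun _ => (1:ℝ)) := by
    refine tendstoInMeasure_const_seq ?_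
    have := tendsto_const_div_atTop_nhds_zero_nat (1:ℝ)
    have h2 : Tendsto (fun _ : ℕ => (1:ℝ)) atTop (𝓝 1) := tendsto_const_nhds
    simpa using h2.add this
  have hstep2 : TendstoInMeasure ℙ
      (fun (n : ℕ) ω => (1 + 1 / (n : ℝ)) - 2 / μn n ω * Vn n ω) atTop
      (fun _ => 1 - 2 / μR * EH) :=
    tendstoInMeasure_comp2' (φ := fun x y => x - y)
      (continuousAt_fst.sub continuousAt_snd) hconst hstep1
  -- a.e. equality with Takayama's statistic
  have hdiag : ∀ i k : ℕ, i ≠ k → ℙ {ω | X i ω = X k ω} = 0 := by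
    intro i k hik
    have hdm : MeasurableSet {p : ℝ × ℝ | p.1 = p.2} :=
      measurableSet_eq_fun measurable_fst measurable_snd
    have h1 : {ω | X i ω = X k ω} = (fun ω => (X i ω, X k ω)) ⁻¹' {p : ℝ × ℝ | p.1 = p.2} :=
      rfl
    rw [h1, ← Measure.map_apply ((hMeas i).prodMk (hMeas k)) hdm, hjoint i k hik]
    rw [Measure.prod_apply hdm]
    have h2 : ∀ a : ℝ, ν (Prod.mk a ⁻¹' {p : ℝ × ℝ | p.1 = p.2}) = 0 := by
      intro a
      have : Prod.mk a ⁻¹' {p : ℝ × ℝ | p.1 = p.2} = {b : ℝ | a = b} := rfl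
      rw [this]
      have : {b : ℝ | a = b} = {a} := by ext b; simp [eq_comm]
      rw [this]
      exact hνatom a
    simp only [h2]
    simp
  have hNnull : ℙ {ω | ¬ ∀ i k : ℕ, i ≠ k → X i ω ≠ X k ω} = 0 := by
    have hsub : {ω | ¬ ∀ i k : ℕ, i ≠ k → X i ω ≠ X k ω} ⊆
        ⋃ p : ℕ × ℕ, {ω | p.1 ≠ p.2 ∧ X p.1 ω = X p.2 ω} := by
      intro ω hω
      simp only [Set.mem_setOf_eq] at hω
      push_neg at hω
      obtain ⟨i, k, hik, heq⟩ := hω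
      exact Set.mem_iUnion.mpr ⟨(i, k), hik, heq⟩
    refine measure_mono_null hsub (measure_iUnion_null fun p => ?_)
    by_cases hp : p.1 = p.2
    · have : {ω | p.1 ≠ p.2 ∧ X p.1 ω = X p.2 ω} = ∅ := by
        ext ω; simp [hp]
      simp [this]
    · refine measure_mono_null (fun ω hω => hω.2) (hdiag p.1 p.2 hp)
  have harith : ∀ m S n2 : ℝ, 2 / (m * n2) * S = 2 / m * (S / n2) := by
    intro m S n2
    rw [← div_div, div_mul_eq_mul_div, mul_div_assoc]
  have hae : ∀ n : ℕ, (fun ω => (1 + 1 / (n : ℝ)) - 2 / μn n ω * Vn n ω)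
      =ᵐ[ℙ] (fun ω => takayamaStat X Z n ω) := by
    intro n
    rw [Filter.EventuallyEq, ae_iff]
    refine measure_mono_null ?_ hNnull
    intro ω hω
    simp only [Set.mem_setOf_eq] at hω ⊢
    intro hb'
    apply hω
    -- now prove the equality for a tie-free ω
    have hsort := sort_sum_eq (fun i => X i ω) n Z (fun i _ k _ hik => hb' i k hik)
    have hsum2 : ∑ i ∈ Finset.range n, ∑ k ∈ Finset.range n,
        (if X i ω ≤ Z then X i ω else 0) * (if X i ω ≤ X k ω then (1:ℝ) else 0)
        = ∑ p ∈ Finset.range n ×ˢ Finset.range n, W p.1 p.2 ω := by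
      rw [← Finset.sum_product' (Finset.range n) (Finset.range n)
        (fun i k => (if X i ω ≤ Z then X i ω else 0) * (if X i ω ≤ X k ω then (1:ℝ) else 0))]
      refine Finset.sum_congr rfl fun p _ => ?_
      rw [hW]
      simp only [hg2, hg1]
      congr 1
      have hx := hNonneg p.1 ω
      by_cases hxz : X p.1 ω ≤ Z
      · simp [hxz, hx]
      · simp [hxz]
    have hTak : takayamaStat X Z n ω = 1 + 1 / (n : ℝ) -
        (2 / (((∑ i ∈ Finset.range n, X i ω) / n) * (n : ℝ) ^ 2)) *
          ∑ p ∈ Finset.range n ×ˢ Finset.range n, W p.1 p.2 ω := by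
      rw [takayamaStat, povertyCount, sortedSample]
      rw [hsort, hsum2]
    rw [hTak, harith]
  exact TendstoInMeasure.congr (fun n => hae n) (by rfl) hstep2
end

section
/- Let A_n = n⁻² Σ_{j=1}^{Q_n} (n−j+1) X_{j,n} and β*_n(ℓ) = −n^{−1/2} Σ_{j=1}^{n} (F_n(X_j) − F(X_j)) ℓ(X_j). Then √n(A_n − ∫ h dF) − 𝔾_n(h) − β*_n(ℓ) → 0 in probability as n → ∞. -/
open MeasureTheory ProbabilityTheory Filter Set

/-- Residual empirical process
`β*_n(f) = −n^{−1/2} Σ_{j=1}^n (F_n(X_j) − F(X_j)) f(X_j)`. -/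
noncomputable def residProc {Ω : Type*} (X : ℕ → Ω → ℝ) (F : ℝ → ℝ) (n : ℕ) (f : ℝ → ℝ)
    (ω : Ω) : ℝ :=
  -(∑ j ∈ Finset.range n, (empCdf X n ω (X j ω) - F (X j ω)) * f (X j ω)) / Real.sqrt n


/-! ### Auxiliary lemmas -/

private theorem sum_range_getD' {M : Type*} [AddCommMonoid M] (f : ℝ → M) (L : List ℝ) :
    ∑ j ∈ Finset.range L.length, f (L.getD j 0) = (L.map f).sum := by
  induction L with
  | nil => simp
  | cons a t ih =>
    rw [List.length_cons, Finset.sum_range_succ']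
    simp only [List.getD_cons_succ, List.getD_cons_zero, ih, List.map_cons, List.sum_cons]
    exact add_comm _ _

private theorem algebra_aux (s nR B C D A EH : ℝ) (hs : s*s = nR) (hspos : 0 < s)
    (key : B - nR*C + nR*D = A) :
    s * (B/nR^2 - EH) - (C - nR*EH)/s - (-(D)/s) = A/(nR*s) := by
  subst hs
  have hs0 : s ≠ 0 := ne_of_gt hspos
  rw [← key]
  field_simp
  ring

private theorem main_det {Ω : Type*} (X : ℕ → Ω → ℝ) (Z : ℝ) (n : ℕ) (ω : Ω)
    (hdist : ∀ i < n, ∀ j < n, i ≠ j → X i ω ≠ X j ω) :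
    ∑ j ∈ Finset.range (povertyCount X Z n ω), ((n:ℝ) - j) * (sortedSample X n ω).getD j 0
      = ∑ i ∈ Finset.range n,
          ((n:ℝ) + 1 - ((Finset.range n).filter (fun k => X k ω ≤ X i ω)).card)
            * ellFun Z (X i ω) := by
  classical
  set L := sortedSample X n ω with hLdef
  have hlen : L.length = n := by
    simp [hLdef, sortedSample, Multiset.length_sort]
  have hsort : L.Pairwise (· ≤ ·) := Multiset.pairwise_sort _ _
  have hmult : (L : Multiset ℝ) = (Finset.range n).val.map (fun i => X i ω) :=
    Multiset.sort_eq _ _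
  have hnd : L.Nodup := by
    rw [← Multiset.coe_nodup, hmult]
    refine Multiset.Nodup.map_on ?_ (Finset.range n).nodup
    intro x hx y hy hxy
    by_contra hne
    exact hdist x (Finset.mem_range.mp hx) y (Finset.mem_range.mp hy) hne hxy
  -- sums over positions = sums over indices
  have hsum : ∀ {M : Type} [AddCommMonoid M] (f : ℝ → M),
      ∑ j ∈ Finset.range n, f (L.getD j 0) = ∑ i ∈ Finset.range n, f (X i ω) := by
    intro M _ f
    have h1 := sum_range_getD' f L
    rw [hlen] at h1
    rw [h1]
    have h2 : ((L : Multiset ℝ).map f).sum = ∑ i ∈ Finset.range n, f (X i ω) := by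
      rw [hmult, Multiset.map_map]
      rfl
    rw [← h2]
    simp
  -- monotonicity of getD
  have hmono : ∀ {a b : ℕ}, a ≤ b → b < n → L.getD a 0 ≤ L.getD b 0 := by
    intro a b hab hb
    have ha : a < L.length := by omega
    have hb' : b < L.length := by omega
    rw [List.getD_eq_getElem _ _ ha, List.getD_eq_getElem _ _ hb']
    rcases eq_or_lt_of_le hab with rfl | h
    · exact le_refl _
    · have := hsort.rel_get_of_lt (a := ⟨a, ha⟩) (b := ⟨b, hb'⟩) h
      simpa using this
  have hstrict : ∀ {a b : ℕ}, a < b → b < n → L.getD a 0 < L.getD b 0 := by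
    intro a b hab hb
    have ha : a < L.length := by omega
    have hb' : b < L.length := by omega
    refine lt_of_le_of_ne (hmono (le_of_lt hab) hb) ?_
    rw [List.getD_eq_getElem _ _ ha, List.getD_eq_getElem _ _ hb']
    intro hc
    exact absurd ((hnd.getElem_inj_iff).mp hc) (by omega)
  set Q := povertyCount X Z n ω with hQdef
  have hQn : Q ≤ n := by
    have := Finset.card_filter_le (Finset.range n) (fun i => X i ω ≤ Z)
    simpa [hQdef, povertyCount] using this
  -- count of poor = Q via positions
  have hQpos : ∑ j ∈ Finset.range n, (if L.getD j 0 ≤ Z then (1:ℕ) else 0) = Q := by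
    rw [hsum (fun v => if v ≤ Z then (1:ℕ) else 0), hQdef]
    unfold povertyCount
    rw [Finset.card_filter]
  -- (b1)
  have hb1 : ∀ j, j < Q → L.getD j 0 ≤ Z := by
    intro j hj
    by_contra hgt
    push_neg at hgt
    have hjn : j < n := lt_of_lt_of_le hj hQn
    have hsplit : ∑ k ∈ Finset.range n, (if L.getD k 0 ≤ Z then (1:ℕ) else 0)
        = ∑ k ∈ Finset.range j, (if L.getD k 0 ≤ Z then (1:ℕ) else 0)
          + ∑ k ∈ Finset.Ico j n, (if L.getD k 0 ≤ Z then (1:ℕ) else 0) := by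
      rw [Finset.range_eq_Ico, Finset.range_eq_Ico, ← Finset.sum_Ico_consecutive _ (Nat.zero_le j) (le_of_lt hjn)]
    have h2 : ∑ k ∈ Finset.Ico j n, (if L.getD k 0 ≤ Z then (1:ℕ) else 0) = 0 := by
      refine Finset.sum_eq_zero ?_
      intro k hk
      rw [Finset.mem_Ico] at hk
      have : Z < L.getD k 0 := lt_of_lt_of_le hgt (hmono hk.1 hk.2)
      rw [if_neg (not_le.mpr this)]
    have h1 : ∑ k ∈ Finset.range j, (if L.getD k 0 ≤ Z then (1:ℕ) else 0) ≤ j := by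
      calc ∑ k ∈ Finset.range j, (if L.getD k 0 ≤ Z then (1:ℕ) else 0)
          ≤ ∑ k ∈ Finset.range j, 1 := Finset.sum_le_sum (fun k _ => by split <;> omega)
        _ = j := by simp
    omega
  -- (b2)
  have hb2 : ∀ j, Q ≤ j → j < n → ¬ L.getD j 0 ≤ Z := by
    intro j hQj hjn hle
    have hsplit : ∑ k ∈ Finset.range n, (if L.getD k 0 ≤ Z then (1:ℕ) else 0)
        = ∑ k ∈ Finset.range (j+1), (if L.getD k 0 ≤ Z then (1:ℕ) else 0)
          + ∑ k ∈ Finset.Ico (j+1) n, (if L.getD k 0 ≤ Z then (1:ℕ) else 0) := by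
      rw [Finset.range_eq_Ico, Finset.range_eq_Ico, ← Finset.sum_Ico_consecutive _ (Nat.zero_le (j+1)) hjn]
    have h1 : ∑ k ∈ Finset.range (j+1), (if L.getD k 0 ≤ Z then (1:ℕ) else 0) = j+1 := by
      have e : ∀ k ∈ Finset.range (j+1), (if L.getD k 0 ≤ Z then (1:ℕ) else 0) = 1 := by
        intro k hk
        rw [Finset.mem_range] at hk
        exact if_pos (le_trans (hmono (by omega) hjn) hle)
      rw [Finset.sum_congr rfl e, Finset.sum_const]
      simp
    omega
  -- (c) position = strict count, as reals
  have hc : ∀ j, j < n → (j:ℝ)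
      = ∑ k ∈ Finset.range n, (if X k ω < L.getD j 0 then (1:ℝ) else 0) := by
    intro j hjn
    rw [← hsum (fun v => if v < L.getD j 0 then (1:ℝ) else 0)]
    have hsplit : ∑ k ∈ Finset.range n, (if L.getD k 0 < L.getD j 0 then (1:ℝ) else 0)
        = ∑ k ∈ Finset.range j, (if L.getD k 0 < L.getD j 0 then (1:ℝ) else 0)
          + ∑ k ∈ Finset.Ico j n, (if L.getD k 0 < L.getD j 0 then (1:ℝ) else 0) := by
      rw [Finset.range_eq_Ico, Finset.range_eq_Ico, ← Finset.sum_Ico_consecutive _ (Nat.zero_le j) (le_of_lt hjn)]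
    have h1 : ∑ k ∈ Finset.range j, (if L.getD k 0 < L.getD j 0 then (1:ℝ) else 0) = j := by
      have e : ∀ k ∈ Finset.range j, (if L.getD k 0 < L.getD j 0 then (1:ℝ) else 0) = 1 := by
        intro k hk
        rw [Finset.mem_range] at hk
        exact if_pos (hstrict hk hjn)
      rw [Finset.sum_congr rfl e, Finset.sum_const]
      simp
    have h2 : ∑ k ∈ Finset.Ico j n, (if L.getD k 0 < L.getD j 0 then (1:ℝ) else 0) = 0 := by
      refine Finset.sum_eq_zero (fun k hk => ?_)
      rw [Finset.mem_Ico] at hk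
      rw [if_neg (not_lt.mpr (hmono hk.1 hk.2))]
    rw [hsplit, h1, h2, add_zero]
  -- step A : extend sum to range n with ellFun
  have stepA : ∑ j ∈ Finset.range Q, ((n:ℝ) - j) * L.getD j 0
      = ∑ j ∈ Finset.range n, ((n:ℝ) - j) * ellFun Z (L.getD j 0) := by
    rw [Finset.range_eq_Ico, Finset.range_eq_Ico, ← Finset.sum_Ico_consecutive _ (Nat.zero_le Q) hQn,
      ← Finset.range_eq_Ico]
    have h2 : ∑ j ∈ Finset.Ico Q n, ((n:ℝ) - j) * ellFun Z (L.getD j 0) = 0 := by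
      refine Finset.sum_eq_zero (fun j hj => ?_)
      rw [Finset.mem_Ico] at hj
      simp only [ellFun]
      rw [if_neg (hb2 j hj.1 hj.2), mul_zero]
    rw [h2, add_zero]
    refine Finset.sum_congr rfl (fun j hj => ?_)
    rw [Finset.mem_range] at hj
    simp only [ellFun]
    rw [if_pos (hb1 j hj)]
  -- step B : replace position by count
  have stepB : ∑ j ∈ Finset.range n, ((n:ℝ) - j) * ellFun Z (L.getD j 0)
      = ∑ j ∈ Finset.range n,
          ((n:ℝ) - ∑ k ∈ Finset.range n, (if X k ω < L.getD j 0 then (1:ℝ) else 0))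
            * ellFun Z (L.getD j 0) := by
    refine Finset.sum_congr rfl (fun j hj => ?_)
    rw [Finset.mem_range] at hj
    rw [← hc j hj]
  -- step C : positions to indices
  have stepC : ∑ j ∈ Finset.range n,
          ((n:ℝ) - ∑ k ∈ Finset.range n, (if X k ω < L.getD j 0 then (1:ℝ) else 0))
            * ellFun Z (L.getD j 0)
      = ∑ i ∈ Finset.range n,
          ((n:ℝ) - ∑ k ∈ Finset.range n, (if X k ω < X i ω then (1:ℝ) else 0))
            * ellFun Z (X i ω) :=
    hsum (fun v => ((n:ℝ) - ∑ k ∈ Finset.range n, (if X k ω < v then (1:ℝ) else 0))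
      * ellFun Z v)
  -- step D : strict count + 1 = weak count
  have stepD : ∀ i, i < n →
      ((Finset.filter (fun k => X k ω ≤ X i ω) (Finset.range n)).card : ℝ)
        = (∑ k ∈ Finset.range n, (if X k ω < X i ω then (1:ℝ) else 0)) + 1 := by
    intro i hin
    have hset : Finset.filter (fun k => X k ω ≤ X i ω) (Finset.range n)
        = insert i (Finset.filter (fun k => X k ω < X i ω) (Finset.range n)) := by
      ext k
      simp only [Finset.mem_filter, Finset.mem_insert, Finset.mem_range]
      constructor
      · rintro ⟨hk, hle⟩
        rcases eq_or_ne k i with rfl | hne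
        · exact Or.inl rfl
        · exact Or.inr ⟨hk, lt_of_le_of_ne hle (hdist k hk i hin hne)⟩
      · rintro (rfl | ⟨hk, hlt⟩)
        · exact ⟨hin, le_refl _⟩
        · exact ⟨hk, le_of_lt hlt⟩
    have hnotmem : i ∉ Finset.filter (fun k => X k ω < X i ω) (Finset.range n) := by
      simp
    rw [hset, Finset.card_insert_of_notMem hnotmem]
    have : (∑ k ∈ Finset.range n, (if X k ω < X i ω then (1:ℝ) else 0))
        = ((Finset.filter (fun k => X k ω < X i ω) (Finset.range n)).card : ℝ) := by
      rw [Finset.card_filter]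
      push_cast
      rfl
    rw [this]
    push_cast
    ring
  rw [stepA, stepB, stepC]
  refine Finset.sum_congr rfl (fun i hi => ?_)
  rw [Finset.mem_range] at hi
  rw [stepD i hi]
  ring

private theorem main_eq {Ω : Type*} [MeasureSpace Ω] (X : ℕ → Ω → ℝ) (F : ℝ → ℝ) (Z : ℝ) (n : ℕ)
    (ω : Ω) (hn : 1 ≤ n) (hdist : ∀ i < n, ∀ j < n, i ≠ j → X i ω ≠ X j ω) :
    Real.sqrt (n : ℝ) *
        ((∑ j ∈ Finset.range (povertyCount X Z n ω),
            ((n : ℝ) - j) * (sortedSample X n ω).getD j 0) / (n : ℝ) ^ 2 -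
          ∫ ω', hFun F Z (X 0 ω')) -
      fep X n (hFun F Z) ω - residProc X F n (ellFun Z) ω
    = (∑ i ∈ Finset.range n, ellFun Z (X i ω)) / ((n : ℝ) * Real.sqrt (n : ℝ)) := by
  have hn0 : (0:ℝ) < n := by exact_mod_cast hn
  have hs : Real.sqrt n * Real.sqrt n = (n:ℝ) := Real.mul_self_sqrt (le_of_lt hn0)
  have hspos : 0 < Real.sqrt (n:ℝ) := Real.sqrt_pos.mpr hn0
  rw [main_det X Z n ω hdist]
  unfold fep residProc
  rw [show (∑ i ∈ Finset.range n, (hFun F Z (X i ω) - ∫ ω', hFun F Z (X 0 ω')))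
      = (∑ i ∈ Finset.range n, hFun F Z (X i ω)) - (n:ℝ) * ∫ ω', hFun F Z (X 0 ω') by
    rw [Finset.sum_sub_distrib, Finset.sum_const, Finset.card_range]
    push_cast; ring]
  refine algebra_aux _ _ _ _ _ _ _ hs hspos ?_
  -- key per-sum identity
  rw [Finset.mul_sum, Finset.mul_sum, ← Finset.sum_sub_distrib, ← Finset.sum_add_distrib]
  refine Finset.sum_congr rfl (fun i hi => ?_)
  have hne : (n:ℝ) ≠ 0 := ne_of_gt hn0
  have hhe : hFun F Z (X i ω) = ellFun Z (X i ω) * (1 - F (X i ω)) := by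
    unfold hFun ellFun; split <;> ring
  unfold empCdf
  rw [hhe]
  field_simp
  ring

private theorem atomless_of_cont {Ω : Type*} [MeasureSpace Ω]
    [IsProbabilityMeasure (ℙ : Measure Ω)]
    (Y : Ω → ℝ) (F : ℝ → ℝ) (hMeas : Measurable Y)
    (hF : ∀ x, F x = (ℙ {ω | Y ω ≤ x}).toReal) (hFcont : Continuous F) (c : ℝ) :
    ℙ {ω | Y ω = c} = 0 := by
  have hb : ∀ k : ℕ, (ℙ {ω | Y ω = c}).toReal ≤ F c - F (c - 1/(k+1)) := by
    intro k
    have hpos : (0:ℝ) < 1/((k:ℝ)+1) := by positivity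
    have hsub : {ω | Y ω = c} ⊆ {ω | Y ω ≤ c} \ {ω | Y ω ≤ c - 1/((k:ℝ)+1)} := by
      intro ω h
      simp only [mem_setOf_eq, mem_diff, not_le] at *
      constructor
      · exact le_of_eq h
      · rw [h]; linarith
    have hsub2 : {ω | Y ω ≤ c - 1/((k:ℝ)+1)} ⊆ {ω | Y ω ≤ c} := by
      intro ω h
      simp only [mem_setOf_eq] at *
      linarith
    have hm2 : MeasurableSet {ω | Y ω ≤ c - 1/((k:ℝ)+1)} := hMeas measurableSet_Iic
    have h1 := measure_mono (μ := (ℙ : Measure Ω)) hsub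
    rw [measure_diff hsub2 hm2.nullMeasurableSet (measure_ne_top _ _)] at h1
    have h2 := ENNReal.toReal_mono (by
      exact ne_of_lt (lt_of_le_of_lt tsub_le_self (measure_lt_top _ _))) h1
    rw [ENNReal.toReal_sub_of_le (measure_mono hsub2) (measure_ne_top _ _)] at h2
    calc (ℙ {ω | Y ω = c}).toReal ≤ _ := h2
      _ = F c - F (c - 1/((k:ℝ)+1)) := by rw [hF, hF]
  have hlim : Tendsto (fun k : ℕ => F c - F (c - 1/((k:ℝ)+1))) atTop (nhds 0) := by
    have h1 : Tendsto (fun k : ℕ => c - 1/((k:ℝ)+1)) atTop (nhds c) := by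
      have := tendsto_one_div_add_atTop_nhds_zero_nat (𝕜 := ℝ)
      simpa using (tendsto_const_nhds (x := c) (f := atTop)).sub this
    have h2 := (hFcont.tendsto c).comp h1
    simpa using (tendsto_const_nhds (x := F c) (f := atTop)).sub h2
  have hle : (ℙ {ω | Y ω = c}).toReal ≤ 0 := ge_of_tendsto' hlim hb
  have : (ℙ {ω | Y ω = c}).toReal = 0 := le_antisymm hle ENNReal.toReal_nonneg
  exact (ENNReal.toReal_eq_zero_iff _).mp this |>.resolve_right (measure_ne_top _ _)

private theorem pair_null {Ω : Type*} [MeasureSpace Ω] [IsProbabilityMeasure (ℙ : Measure Ω)]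
    (X : ℕ → Ω → ℝ) (F : ℝ → ℝ) (hMeas : ∀ i, Measurable (X i))
    (hIndep : iIndepFun X ℙ)
    (hIdent : ∀ i, IdentDistrib (X i) (X 0) ℙ ℙ)
    (hF : ∀ x, F x = (ℙ {ω | X 0 ω ≤ x}).toReal) (hFcont : Continuous F)
    {i j : ℕ} (hij : i ≠ j) :
    ℙ {ω | X i ω = X j ω} = 0 := by
  have hind : IndepFun (X i) (X j) ℙ := hIndep.indepFun hij
  have hmap : Measure.map (fun ω => (X i ω, X j ω)) ℙ
      = (Measure.map (X i) ℙ).prod (Measure.map (X j) ℙ) :=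
    (indepFun_iff_map_prod_eq_prod_map_map (hMeas i).aemeasurable (hMeas j).aemeasurable).mp hind
  have hD : MeasurableSet {p : ℝ × ℝ | p.1 = p.2} :=
    (isClosed_eq continuous_fst continuous_snd).measurableSet
  haveI : IsProbabilityMeasure (Measure.map (X i) ℙ) :=
    Measure.isProbabilityMeasure_map (hMeas i).aemeasurable
  haveI : IsProbabilityMeasure (Measure.map (X j) ℙ) :=
    Measure.isProbabilityMeasure_map (hMeas j).aemeasurable
  have h1 : ℙ {ω | X i ω = X j ω}
      = Measure.map (fun ω => (X i ω, X j ω)) ℙ {p : ℝ × ℝ | p.1 = p.2} := by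
    rw [Measure.map_apply ((hMeas i).prodMk (hMeas j)) hD]
    rfl
  have h2 : ∀ x : ℝ, (Measure.map (X j) ℙ) (Prod.mk x ⁻¹' {p : ℝ × ℝ | p.1 = p.2}) = 0 := by
    intro x
    have hpre : Prod.mk x ⁻¹' {p : ℝ × ℝ | p.1 = p.2} = ({x} : Set ℝ) := by
      ext y; simp [eq_comm]
    rw [hpre, (hIdent j).map_eq, Measure.map_apply (hMeas 0) (measurableSet_singleton x)]
    exact atomless_of_cont (X 0) F (hMeas 0) hF hFcont x
  rw [h1, hmap, Measure.prod_apply hD]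
  rw [lintegral_congr h2, lintegral_zero]

private theorem dist_null {Ω : Type*} [MeasureSpace Ω] [IsProbabilityMeasure (ℙ : Measure Ω)]
    (X : ℕ → Ω → ℝ) (F : ℝ → ℝ) (hMeas : ∀ i, Measurable (X i))
    (hIndep : iIndepFun X ℙ)
    (hIdent : ∀ i, IdentDistrib (X i) (X 0) ℙ ℙ)
    (hF : ∀ x, F x = (ℙ {ω | X 0 ω ≤ x}).toReal) (hFcont : Continuous F) (n : ℕ) :
    ℙ {ω | ¬ ∀ i < n, ∀ j < n, i ≠ j → X i ω ≠ X j ω} = 0 := by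
  set S : Set Ω := ⋃ i ∈ Finset.range n, ⋃ j ∈ Finset.range n,
    {ω | i ≠ j ∧ X i ω = X j ω} with hSdef
  have hsub : {ω | ¬ ∀ i < n, ∀ j < n, i ≠ j → X i ω ≠ X j ω} ⊆ S := by
    intro ω hω
    simp only [mem_setOf_eq] at hω
    push_neg at hω
    obtain ⟨i, hi, j, hj, hij, hXij⟩ := hω
    simp only [hSdef, mem_iUnion, Finset.mem_range, mem_setOf_eq]
    exact ⟨i, hi, j, hj, hij, hXij⟩
  refine measure_mono_null hsub ?_
  · refine measure_biUnion_null_iff (Finset.range n).countable_toSet |>.mpr (fun i _ => ?_)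
    refine measure_biUnion_null_iff (Finset.range n).countable_toSet |>.mpr (fun j _ => ?_)
    rcases eq_or_ne i j with rfl | hij
    · simp
    · exact measure_mono_null (fun ω h => h.2) (pair_null X F hMeas hIndep hIdent hF hFcont hij)

/-- with `A_n = n⁻² Σ_{j=1}^{Q_n} (n−j+1) X_{j,n}`,
`√n (A_n − ∫ h dF) − 𝔾_n(h) − β*_n(ℓ) → 0` in probability. -/
theorem statement7
    {Ω : Type*} [MeasureSpace Ω] [IsProbabilityMeasure (ℙ : Measure Ω)]
    (X : ℕ → Ω → ℝ) (F : ℝ → ℝ) (Z : ℝ) (hZ : 0 < Z)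
    (hMeas : ∀ i, Measurable (X i))
    (hIndep : iIndepFun X ℙ)
    (hIdent : ∀ i, IdentDistrib (X i) (X 0) ℙ ℙ)
    (hNonneg : ∀ i ω, 0 ≤ X i ω)
    (hF : ∀ x, F x = (ℙ {ω | X 0 ω ≤ x}).toReal)
    (hFcont : Continuous F)
    (hFmono : StrictMonoOn F (Set.Ici (0 : ℝ)))
    (hFinv1 : ∀ x ≥ (0 : ℝ), Finv F (F x) = x)
    (hFinv2 : ∀ s ∈ Set.Ioo (0 : ℝ) 1, F (Finv F s) = s)
    (hIntX : Integrable (X 0) ℙ)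
    (hIntX2 : Integrable (fun ω => (X 0 ω) ^ 2) ℙ)
    (hμpos : 0 < ∫ ω, X 0 ω) :
    TendstoInMeasure ℙ
      (fun (n : ℕ) (ω : Ω) =>
        Real.sqrt (n : ℝ) *
            ((∑ j ∈ Finset.range (povertyCount X Z n ω),
                ((n : ℝ) - j) * (sortedSample X n ω).getD j 0) / (n : ℝ) ^ 2 -
              ∫ ω', hFun F Z (X 0 ω')) -
          fep X n (hFun F Z) ω - residProc X F n (ellFun Z) ω)
      atTop (fun _ => 0) := by
  rw [tendstoInMeasure_iff_dist]
  intro ε hε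
  -- √n → ∞ so Z/√n → 0
  have hsq : Tendsto (fun k : ℕ => Real.sqrt k) atTop atTop := by
    have h1 : Tendsto Real.sqrt atTop atTop := by
      apply tendsto_atTop_atTop.mpr
      intro b
      exact ⟨b^2, fun a ha => by
        nlinarith [Real.sq_sqrt (by nlinarith [sq_nonneg b] : (0:ℝ) ≤ a), Real.sqrt_nonneg a]⟩
    exact h1.comp tendsto_natCast_atTop_atTop
  have h0 : Tendsto (fun k : ℕ => Z / Real.sqrt (k:ℝ)) atTop (nhds 0) :=
    Tendsto.div_atTop tendsto_const_nhds hsq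
  have hev : ∀ᶠ k : ℕ in atTop, Z / Real.sqrt (k:ℝ) < ε := h0.eventually (eventually_lt_nhds hε)
  have hzero : ∀ᶠ n : ℕ in atTop,
      ℙ {ω | ε ≤ dist (Real.sqrt (n : ℝ) *
            ((∑ j ∈ Finset.range (povertyCount X Z n ω),
                ((n : ℝ) - j) * (sortedSample X n ω).getD j 0) / (n : ℝ) ^ 2 -
              ∫ ω', hFun F Z (X 0 ω')) -
          fep X n (hFun F Z) ω - residProc X F n (ellFun Z) ω) 0} = 0 := by
    filter_upwards [hev, eventually_ge_atTop 1] with n hnε hn1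
    refine measure_mono_null ?_ (dist_null X F hMeas hIndep hIdent hF hFcont n)
    intro ω hω
    simp only [mem_setOf_eq] at hω ⊢
    intro hdist
    have heq := main_eq X F Z n ω hn1 hdist
    rw [Real.dist_eq, sub_zero, heq] at hω
    have hn0 : (0:ℝ) < n := by exact_mod_cast hn1
    have hspos : 0 < Real.sqrt (n:ℝ) := Real.sqrt_pos.mpr hn0
    have hA0 : 0 ≤ ∑ i ∈ Finset.range n, ellFun Z (X i ω) := by
      refine Finset.sum_nonneg (fun i _ => ?_)
      unfold ellFun
      split
      · exact hNonneg i ω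
      · exact le_refl 0
    have hAZ : ∑ i ∈ Finset.range n, ellFun Z (X i ω) ≤ (n:ℝ) * Z := by
      calc ∑ i ∈ Finset.range n, ellFun Z (X i ω) ≤ ∑ _i ∈ Finset.range n, Z := by
            refine Finset.sum_le_sum (fun i _ => ?_)
            unfold ellFun
            split
            · assumption
            · exact le_of_lt hZ
        _ = (n:ℝ) * Z := by simp [mul_comm]
    have habs : |(∑ i ∈ Finset.range n, ellFun Z (X i ω)) / ((n:ℝ) * Real.sqrt (n:ℝ))|
        = (∑ i ∈ Finset.range n, ellFun Z (X i ω)) / ((n:ℝ) * Real.sqrt (n:ℝ)) :=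
      abs_of_nonneg (div_nonneg hA0 (by positivity))
    rw [habs] at hω
    have hle : (∑ i ∈ Finset.range n, ellFun Z (X i ω)) / ((n:ℝ) * Real.sqrt (n:ℝ))
        ≤ Z / Real.sqrt (n:ℝ) := by
      rw [div_le_div_iff₀ (by positivity) hspos]
      calc (∑ i ∈ Finset.range n, ellFun Z (X i ω)) * Real.sqrt (n:ℝ)
          ≤ ((n:ℝ) * Z) * Real.sqrt (n:ℝ) := by
            exact mul_le_mul_of_nonneg_right hAZ (le_of_lt hspos)
        _ = Z * ((n:ℝ) * Real.sqrt (n:ℝ)) := by ring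
    linarith
  exact Tendsto.congr' (EventuallyEq.symm hzero) tendsto_const_nhds
end
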